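/- Suppose 1 ≤ n ≤ 2^{m-1} - 1. Then g(n,m) > n(m+1)/(log_2(n+1) + 2). -/

import Mathlib

open Finset

/-- `f` assigns each component (indexed by `ι`) to one of `n` classes so that the
components in each class are pairwise disjoint with union `[m]`: every `x ∈ [m]`
lies in exactly one component of each class. -/
def IsResolution {ι : Type*} {m n : ℕ} (C : ι → Finset (Fin m)) (f : ι → Fin n) : Prop :=
  ∀ (i : Fin n) (x : Fin m), ∃! j : ι, f j = i ∧ x ∈ C j

/-- The multiset of nonempty subsets of `[m]` given by `C` is uniquely resolvable
into `n` classes: a resolution exists and is unique up to renaming the classes. -/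
def UniquelyResolvable {ι : Type*} {m : ℕ} (n : ℕ) (C : ι → Finset (Fin m)) : Prop :=
  (∀ j, (C j).Nonempty) ∧ ∃ f : ι → Fin n, IsResolution C f ∧
    ∀ f' : ι → Fin n, IsResolution C f' → ∃ σ : Equiv.Perm (Fin n), f' = σ ∘ f

/-- `g n m` : maximum size of a multiset of nonempty subsets of `[m]` that is
uniquely resolvable into `n` classes. -/
noncomputable def g (n m : ℕ) : ℕ :=
  sSup {k | ∃ C : Fin k → Finset (Fin m), UniquelyResolvable n C}

/-- `P k m` : the largest `N` such that there is a multiset of nonempty subsets of `[m]`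
uniquely resolvable into `N` classes in which every class has size exactly `k`. -/
noncomputable def P (k m : ℕ) : ℕ :=
  sSup {N | ∃ C : Fin N × Fin k → Finset (Fin m),
    UniquelyResolvable N C ∧ IsResolution C Prod.fst}

/-- The binary entropy function. -/
noncomputable def H2 (x : ℝ) : ℝ := -x * Real.logb 2 x - (1 - x) * Real.logb 2 (1 - x)

namespace Stmt9Aux

/-- `x` lies in the pattern of class `i` (block `x/(s+1)` must be a real block `≤ K`,
and the bit of `i+1` at the in-block offset is set). -/
abbrev pp (K s i x : ℕ) : Prop := x / (s+1) ≤ K ∧ (i+1).testBit (x % (s+1)) = true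

instance (K s i x : ℕ) : Decidable (pp K s i x) := by unfold pp; infer_instance

/-- which part (among the `K+2` parts of class `i`) the point `x` belongs to. -/
def prt (K s i x : ℕ) : ℕ := if pp K s i x then x / (s+1) else min (x/(s+1)) K + 1

lemma prt_lt (K s i x : ℕ) : prt K s i x < K + 2 := by
  unfold prt; split
  · next h => have := h.1; omega
  · have := min_le_right (x/(s+1)) K; omega

lemma idx_lt {n K i r : ℕ} (hi : i < n) (hr : r < K+2) : i*(K+2)+r < n*(K+2) :=
  calc i*(K+2)+r < (i+1)*(K+2) := by nlinarith
  _ ≤ n*(K+2) := Nat.mul_le_mul_right _ hi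

lemma div_idx {K i r : ℕ} (hr : r < K+2) : (i*(K+2)+r) / (K+2) = i := by
  rw [add_comm, Nat.add_mul_div_right _ _ (by omega), Nat.div_eq_of_lt hr]; omega

lemma mod_idx {K i r : ℕ} (hr : r < K+2) : (i*(K+2)+r) % (K+2) = r := by
  rw [add_comm, Nat.add_mul_mod_self_right, Nat.mod_eq_of_lt hr]

lemma marker_lt {K s m q : ℕ} (hm : (K+1)*(s+1) ≤ m) (hq : q ≤ K) : q*(s+1)+s < m :=
  calc q*(s+1)+s < (q+1)*(s+1) := by nlinarith
  _ ≤ (K+1)*(s+1) := Nat.mul_le_mul_right _ (by omega)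
  _ ≤ m := hm

lemma div_blk {s q b : ℕ} (hb : b < s+1) : (q*(s+1)+b) / (s+1) = q := by
  rw [add_comm, Nat.add_mul_div_right _ _ (by omega), Nat.div_eq_of_lt hb]; omega

lemma mod_blk {s q b : ℕ} (hb : b < s+1) : (q*(s+1)+b) % (s+1) = b := by
  rw [add_comm, Nat.add_mul_mod_self_right, Nat.mod_eq_of_lt hb]

lemma prt_marker {K s q i : ℕ} (hq : q ≤ K) (hi : i + 1 < 2^s) :
    prt K s i (q*(s+1)+s) = q+1 := by
  have hd : (q*(s+1)+s) / (s+1) = q := div_blk (by omega)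
  have hmo : (q*(s+1)+s) % (s+1) = s := mod_blk (by omega)
  unfold prt
  rw [if_neg, hd, min_eq_left hq]
  unfold pp
  rw [hmo, Nat.testBit_lt_two_pow hi]
  simp

lemma bit_lt {i s b : ℕ} (hi : i + 1 < 2^s) (hb : (i+1).testBit b = true) : b < s := by
  have h1 := Nat.ge_two_pow_of_testBit hb
  by_contra hc
  have : 2^s ≤ 2^b := Nat.pow_le_pow_right (by omega) (by omega)
  omega

lemma prt_pat {K s i b q : ℕ} (hq : q ≤ K) (hi : i + 1 < 2^s)
    (hb : (i+1).testBit b = true) : prt K s i (q*(s+1)+b) = q := by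
  have hbs : b < s := bit_lt hi hb
  have hd : (q*(s+1)+b) / (s+1) = q := div_blk (by omega)
  have hmo : (q*(s+1)+b) % (s+1) = b := mod_blk (by omega)
  unfold prt
  rw [if_pos, hd]
  exact ⟨by rw [hd]; exact hq, by rw [hmo]; exact hb⟩

/-- For `x` in a real block `r ≤ K`: the part of `x` is `r` iff the bit is set,
`r+1` iff not. -/
lemma prt_block {K s i x r : ℕ} (hxr : x/(s+1) = r) (hrK : r ≤ K) :
    (prt K s i x = r ↔ (i+1).testBit (x%(s+1)) = true)
    ∧ (prt K s i x = r + 1 ↔ (i+1).testBit (x%(s+1)) = false) := by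
  have hmin : min (x/(s+1)) K = r := by rw [hxr]; exact min_eq_left hrK
  unfold prt pp
  by_cases hb : (i+1).testBit (x % (s+1)) = true
  · rw [if_pos ⟨by omega, hb⟩, hxr]
    exact ⟨by simp [hb], by simp [hb]⟩
  · rw [if_neg (by tauto), hmin]
    simp only [Bool.not_eq_true] at hb
    exact ⟨by simp [hb], by simp [hb]⟩

lemma prt_two {K s i x r : ℕ} (hxr : x/(s+1) = r) (hrK : r ≤ K) :
    prt K s i x = r ∨ prt K s i x = r + 1 := by
  rcases Bool.eq_false_or_eq_true ((i+1).testBit (x%(s+1))) with hb | hb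
  · left; exact ((prt_block (i := i) hxr hrK).1).mpr hb
  · right; exact ((prt_block (i := i) hxr hrK).2).mpr hb

/-- The construction: `n*(K+2)` subsets of `Fin m`. Index `j` encodes class `j/(K+2)`
and part `j%(K+2)`. -/
def Cst (n K s m : ℕ) : Fin (n*(K+2)) → Finset (Fin m) :=
  fun j => univ.filter fun x => prt K s (j.val/(K+2)) x.val = j.val % (K+2)

lemma mem_Cst {n K s m : ℕ} {j} {x : Fin m} :
    x ∈ Cst n K s m j ↔ prt K s (j.val/(K+2)) x.val = j.val % (K+2) := by
  simp [Cst]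

lemma div_lt_n {n K : ℕ} (j : Fin (n*(K+2))) : j.val/(K+2) < n :=
  Nat.div_lt_of_lt_mul (lt_of_lt_of_eq j.2 (mul_comm n (K+2)))

def fres (n K : ℕ) : Fin (n*(K+2)) → Fin n := fun j => ⟨j.val/(K+2), div_lt_n j⟩

lemma exists_bit (i : ℕ) : ∃ b, (i+1).testBit b = true :=
  Nat.exists_testBit_of_ne_zero (by omega)

lemma Cst_nonempty {n K s m : ℕ} (hns : n+1 ≤ 2^s) (hm : (K+1)*(s+1) ≤ m)
    (j : Fin (n*(K+2))) : (Cst n K s m j).Nonempty := by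
  set i := j.val/(K+2) with hi
  have hin : i < n := div_lt_n j
  have hi2 : i + 1 < 2^s := by omega
  have hr : j.val % (K+2) < K+2 := Nat.mod_lt _ (by omega)
  rcases Nat.eq_zero_or_pos (j.val % (K+2)) with h0 | h1
  · obtain ⟨b, hb⟩ := exists_bit i
    have hbs : b < s := bit_lt hi2 hb
    have hbm : b < m := by
      have : s+1 ≤ (K+1)*(s+1) := by nlinarith
      omega
    refine ⟨⟨b, hbm⟩, mem_Cst.mpr ?_⟩
    have := prt_pat (q := 0) (K := K) (s := s) (by omega) hi2 hb
    simpa [h0] using this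
  · set q := j.val % (K+2) - 1 with h41
    have hq : q ≤ K := by omega
    refine ⟨⟨q*(s+1)+s, marker_lt hm hq⟩, mem_Cst.mpr ?_⟩
    have := prt_marker (K := K) (i := j.val/(K+2)) hq hi2
    simp only [this]
    omega

lemma isres_fres {n K s m : ℕ} : IsResolution (Cst n K s m) (fres n K) := by
  intro i x
  refine ⟨⟨i.val*(K+2) + prt K s i.val x.val, idx_lt i.2 (prt_lt _ _ _ _)⟩,
    ⟨?_, ?_⟩, ?_⟩
  · apply Fin.ext
    exact div_idx (prt_lt _ _ _ _)
  · rw [mem_Cst]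
    rw [div_idx (prt_lt _ _ _ _), mod_idx (prt_lt _ _ _ _)]
  · rintro j ⟨hjf, hjx⟩
    apply Fin.ext
    have h1 : j.val/(K+2) = i.val := congrArg Fin.val hjf
    have h2 := mem_Cst.mp hjx
    rw [h1] at h2
    show j.val = i.val*(K+2) + prt K s i.val x.val
    rw [h2, ← h1]
    exact (Nat.div_add_mod' _ _).symm


lemma idx_lt0 {n K i : ℕ} (hi : i < n) : i*(K+2) < n*(K+2) :=
  mul_lt_mul_of_pos_right hi (by omega)

lemma prt_eq_zero {K s i x : ℕ} :
    prt K s i x = 0 ↔ (x/(s+1) = 0 ∧ (i+1).testBit (x%(s+1)) = true) := by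
  unfold prt pp
  by_cases hb : x/(s+1) ≤ K ∧ (i+1).testBit (x%(s+1)) = true
  · rw [if_pos hb]; exact ⟨fun h => ⟨h, hb.2⟩, fun h => h.1⟩
  · rw [if_neg hb]
    exact ⟨fun h => absurd h (Nat.succ_ne_zero _), fun h => absurd ⟨by rw [h.1]; omega, h.2⟩ hb⟩

lemma testBit_eq_of_ge {i1 i2 s b : ℕ} (h1 : i1 < 2^s) (h2 : i2 < 2^s) (hb : s ≤ b) :
    i1.testBit b = i2.testBit b := by
  have e1 : i1 < 2^b := lt_of_lt_of_le h1 (Nat.pow_le_pow_right (by omega) hb)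
  have e2 : i2 < 2^b := lt_of_lt_of_le h2 (Nat.pow_le_pow_right (by omega) hb)
  rw [Nat.testBit_lt_two_pow e1, Nat.testBit_lt_two_pow e2]

lemma mem_Cst_val {n K s m : ℕ} {j : Fin (n*(K+2))} {x : ℕ} {hx : x < m} :
    (⟨x, hx⟩ : Fin m) ∈ Cst n K s m j ↔ prt K s (j.val/(K+2)) x = j.val % (K+2) := mem_Cst

lemma mem_Cst_idx {n K s m : ℕ} {i r x : ℕ} (hi : i < n) (hr : r < K+2) (hx : x < m) :
    (⟨x, hx⟩ : Fin m) ∈ Cst n K s m ⟨i*(K+2)+r, idx_lt hi hr⟩ ↔ prt K s i x = r := by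
  rw [mem_Cst_val]
  show prt K s ((i*(K+2)+r)/(K+2)) x = (i*(K+2)+r)%(K+2) ↔ _
  rw [div_idx hr, mod_idx hr]

theorem res_unique {n K s m : ℕ} (hns : n+1 ≤ 2^s) (hm : (K+1)*(s+1) ≤ m)
    (f' : Fin (n*(K+2)) → Fin n) (hf' : IsResolution (Cst n K s m) f') :
    ∃ σ : Equiv.Perm (Fin n), f' = σ ∘ fres n K := by
  have hi2 : ∀ i : Fin n, i.val + 1 < 2^s := fun i => by have := i.2; omega
  have hsm : s < m := by nlinarith
  -- choice function giving the unique member of class `i'` containing `x`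
  obtain ⟨u, hu1, hu2⟩ : ∃ u : Fin n → Fin m → Fin (n*(K+2)),
      (∀ i' x, f' (u i' x) = i' ∧ x ∈ Cst n K s m (u i' x)) ∧
      (∀ i' x j, f' j = i' → x ∈ Cst n K s m j → j = u i' x) :=
    ⟨fun i' x => (hf' i' x).choose, fun i' x => (hf' i' x).choose_spec.1,
      fun i' x j h1 h2 => (hf' i' x).choose_spec.2 j ⟨h1, h2⟩⟩
  -- the pure pattern sets
  set A : Fin n → Finset (Fin m) :=
    fun i => Cst n K s m ⟨i.val*(K+2), idx_lt0 i.2⟩ with hA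
  have hA_mem : ∀ (i : Fin n) (x : Fin m), x ∈ A i ↔ prt K s i.val x.val = 0 := by
    intro i x
    rw [hA, mem_Cst]
    have hd : (i.val*(K+2))/(K+2) = i.val := by
      have := div_idx (K := K) (i := i.val) (r := 0) (by omega); simpa using this
    have hmo : (i.val*(K+2)) % (K+2) = 0 := Nat.mul_mod_left _ _
    rw [hd, hmo]
  have hbit_mem : ∀ (i : Fin n) (b : ℕ) (hbm : b < m), b < s →
      ((⟨b, hbm⟩ : Fin m) ∈ A i ↔ (i.val+1).testBit b = true) := by
    intro i b hbm hbs
    rw [hA_mem, prt_eq_zero]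
    rw [Nat.div_eq_of_lt (show b < s+1 by omega), Nat.mod_eq_of_lt (show b < s+1 by omega)]
    simp
  have hAinj : Function.Injective A := by
    intro i1 i2 h12
    have hb : ∀ b, (i1.val+1).testBit b = (i2.val+1).testBit b := by
      intro b
      by_cases hbs : b < s
      · have hbm : b < m := by omega
        have : ((i1.val+1).testBit b = true ↔ (i2.val+1).testBit b = true) := by
          rw [← hbit_mem i1 b hbm hbs, ← hbit_mem i2 b hbm hbs, h12]
        exact Bool.eq_iff_iff.mpr this
      · exact testBit_eq_of_ge (hi2 i1) (hi2 i2) (by omega)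
    exact Fin.ext (by have := Nat.eq_of_testBit_eq hb; omega)
  -- every class has a unique member containing the base marker ⟨s,_⟩, with part 1
  have hmod1 : ∀ i', (u i' ⟨s, hsm⟩).val % (K+2) = 1 := by
    intro i'
    have h := mem_Cst.mp (hu1 i' ⟨s, hsm⟩).2
    have hp := prt_marker (K := K) (q := 0)
      (i := (u i' ⟨s, hsm⟩).val/(K+2)) (by omega) (hi2 ⟨_, div_lt_n _⟩)
    simp only [zero_mul, zero_add] at hp
    rw [show ((⟨s, hsm⟩ : Fin m)).val = s from rfl] at h
    rw [hp] at h
    omega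
  set π : Fin n → Fin n := fun i' => ⟨(u i' ⟨s, hsm⟩).val/(K+2), div_lt_n _⟩ with hπ
  have hπval : ∀ i', (u i' ⟨s, hsm⟩).val = (π i').val * (K+2) + 1 := by
    intro i'
    have h := hmod1 i'
    have h2 := Nat.div_add_mod' (u i' ⟨s, hsm⟩).val (K+2)
    rw [h] at h2
    exact h2.symm
  have hπinj : Function.Injective π := by
    intro i1 i2 h12
    have : (u i1 ⟨s, hsm⟩) = (u i2 ⟨s, hsm⟩) := by
      apply Fin.ext
      rw [hπval i1, hπval i2, h12]
    rw [← (hu1 i1 ⟨s, hsm⟩).1, ← (hu1 i2 ⟨s, hsm⟩).1, this]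
  set hcl : Fin n → Fin n := fun i => f' ⟨i.val*(K+2), idx_lt0 i.2⟩ with hhcl
  -- the pure set of `i` is contained in the pure set of `π (hcl i)`
  have hsub : ∀ i, A i ⊆ A (π (hcl i)) := by
    intro i x hx
    have hx0 := (hA_mem i x).1 hx
    obtain ⟨hxdiv, -⟩ := prt_eq_zero.mp hx0
    -- x is not in the part-1 set of class (hcl i)
    have hne : u (hcl i) ⟨s, hsm⟩ ≠ ⟨i.val*(K+2), idx_lt0 i.2⟩ := by
      intro heq
      have h1' : (i.val*(K+2)) % (K+2) = 1 := by
        have h := hmod1 (hcl i); rw [heq] at h; exact h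
      rw [Nat.mul_mod_left] at h1'
      omega
    have hxnot : x ∉ Cst n K s m (u (hcl i) ⟨s, hsm⟩) := by
      intro hxm
      have hx' : x ∈ Cst n K s m ⟨i.val*(K+2), idx_lt0 i.2⟩ := hx
      have e1 : (⟨i.val*(K+2), idx_lt0 i.2⟩ : Fin (n*(K+2))) = u (hcl i) x :=
        hu2 (hcl i) x _ rfl hx'
      have e2 : u (hcl i) ⟨s, hsm⟩ = u (hcl i) x :=
        hu2 (hcl i) x _ (hu1 (hcl i) ⟨s, hsm⟩).1 hxm
      exact hne (e2.trans e1.symm)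
    have hprt1 : prt K s (π (hcl i)).val x.val ≠ 1 := by
      intro hp
      apply hxnot
      apply mem_Cst.mpr
      rw [hmod1 (hcl i)]
      exact hp
    have hprt0 : prt K s (π (hcl i)).val x.val = 0 := by
      rcases prt_two (K := K) (i := (π (hcl i)).val) hxdiv (by omega) with h | h
      · exact h
      · exact absurd h hprt1
    exact (hA_mem _ x).2 hprt0
  -- surjectivity of the class map on pure sets
  have hsurj : Function.Surjective hcl := by
    intro i'
    obtain ⟨x, hx⟩ := Cst_nonempty hns hm
      (⟨(π i').val*(K+2), idx_lt0 (π i').2⟩ : Fin (n*(K+2)))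
    have hx' : x ∈ A (π i') := hx
    have hx0 := (hA_mem _ x).1 hx'
    obtain ⟨hxdiv, -⟩ := prt_eq_zero.mp hx0
    have hjf := (hu1 i' x).1
    have hjx := (hu1 i' x).2
    have hjprt : prt K s ((u i' x).val/(K+2)) x.val = (u i' x).val % (K+2) := mem_Cst.mp hjx
    have hcases := prt_two (K := K) (i := (u i' x).val/(K+2)) hxdiv (by omega)
    rw [hjprt] at hcases
    rcases hcases with hc | hc
    · refine ⟨⟨(u i' x).val/(K+2), div_lt_n _⟩, ?_⟩
      have hval : ((u i' x).val/(K+2))*(K+2) = (u i' x).val := by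
        have h := Nat.div_add_mod' (u i' x).val (K+2)
        rw [hc, Nat.add_zero] at h
        exact h
      have hje : (⟨((u i' x).val/(K+2))*(K+2), idx_lt0 (div_lt_n _)⟩ : Fin (n*(K+2)))
          = u i' x := Fin.ext hval
      calc hcl ⟨(u i' x).val/(K+2), div_lt_n _⟩
          = f' ⟨((u i' x).val/(K+2))*(K+2), idx_lt0 (div_lt_n _)⟩ := rfl
        _ = f' (u i' x) := by rw [hje]
        _ = i' := hjf
    · exfalso
      have hj1 : u i' x = u i' ⟨s, hsm⟩ := by
        apply hu2 i' ⟨s, hsm⟩ _ hjf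
        apply mem_Cst_val.mpr
        have hp := prt_marker (K := K) (q := 0) (i := (u i' x).val/(K+2)) (by omega)
          (hi2 ⟨_, div_lt_n (u i' x)⟩)
        simp only [zero_mul, zero_add] at hp
        rw [hp, hc]
      have hπe : (π i').val = (u i' x).val/(K+2) := by rw [hj1]
      rw [hπe] at hx0
      omega
  have hclbij : Function.Bijective hcl := Finite.surjective_iff_bijective.mp hsurj
  have hπbij : Function.Bijective π := Finite.injective_iff_bijective.mp hπinj
  have hτid : ∀ i, π (hcl i) = i := by
    have hτbij : Function.Bijective (fun i => π (hcl i)) := hπbij.comp hclbij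
    have hsum : ∑ i, (A i).card = ∑ i, (A (π (hcl i))).card :=
      (Equiv.sum_comp (Equiv.ofBijective _ hτbij) (fun i => (A i).card)).symm
    have hkey := (Finset.sum_eq_sum_iff_of_le
      (fun i (_ : i ∈ (univ : Finset (Fin n))) => Finset.card_le_card (hsub i))).mp hsum
    intro i
    have hAeq : A i = A (π (hcl i)) :=
      Finset.eq_of_subset_of_card_le (hsub i) (le_of_eq (hkey i (mem_univ i)).symm)
    exact (hAinj hAeq).symm
  have hbase0 : ∀ i', f' ⟨(π i').val*(K+2), idx_lt0 (π i').2⟩ = i' := by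
    intro i'
    exact hπinj (hτid (π i'))
  have hbase1 : ∀ i', f' ⟨(π i').val*(K+2)+1, idx_lt (π i').2 (by omega)⟩ = i' := by
    intro i'
    have h := (hu1 i' ⟨s, hsm⟩).1
    have he : u i' ⟨s, hsm⟩ = ⟨(π i').val*(K+2)+1, idx_lt (π i').2 (by omega)⟩ :=
      Fin.ext (hπval i')
    rw [← he]
    exact h
  -- the chaining step
  have hstep : ∀ (i' : Fin n) (r : ℕ) (hr1 : 1 ≤ r) (hrK : r ≤ K)
      (hprev : f' ⟨(π i').val*(K+2)+r, idx_lt (π i').2 (by omega)⟩ = i'),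
      f' ⟨(π i').val*(K+2)+(r+1), idx_lt (π i').2 (by omega)⟩ = i' := by
    intro i' r hr1 hrK hprev
    have hem : r*(s+1)+s < m := marker_lt hm hrK
    have hj'f : f' (u i' ⟨r*(s+1)+s, hem⟩) = i' := (hu1 i' ⟨r*(s+1)+s, hem⟩).1
    have hj'x := (hu1 i' ⟨r*(s+1)+s, hem⟩).2
    set j' := u i' ⟨r*(s+1)+s, hem⟩ with hj'def
    have hi''n : j'.val/(K+2) < n := div_lt_n j'
    have hj'mod : j'.val % (K+2) = r+1 := by
      have h : prt K s (j'.val/(K+2)) (r*(s+1)+s) = j'.val % (K+2) := mem_Cst.mp hj'x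
      have hp := prt_marker (K := K) (q := r) (i := j'.val/(K+2)) hrK (hi2 ⟨_, hi''n⟩)
      rw [hp] at h
      omega
    have hbits : ∀ b, ((π i').val+1).testBit b = ((j'.val/(K+2))+1).testBit b := by
      intro b
      by_cases hbs : b < s
      · have hxm : r*(s+1)+b < m := by omega
        have hxdiv : (r*(s+1)+b)/(s+1) = r := div_blk (by omega)
        have hxmod : (r*(s+1)+b)%(s+1) = b := mod_blk (by omega)
        obtain ⟨hjf, hjx⟩ := hu1 i' ⟨r*(s+1)+b, hxm⟩
        have hjprt : prt K s ((u i' ⟨r*(s+1)+b, hxm⟩).val/(K+2)) (r*(s+1)+b)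
            = (u i' ⟨r*(s+1)+b, hxm⟩).val % (K+2) := mem_Cst.mp hjx
        have hcases := prt_two (K := K) (i := (u i' ⟨r*(s+1)+b, hxm⟩).val/(K+2)) hxdiv hrK
        rw [hjprt] at hcases
        rcases hcases with hc | hc
        · -- the set containing x has part r, so it is the class-i' part-r set
          have hhm : (r-1)*(s+1)+s < m := marker_lt hm (by omega)
          have hpm : ∀ a : ℕ, a < n → prt K s a ((r-1)*(s+1)+s) = r := by
            intro a ha
            have hp := prt_marker (K := K) (q := r-1) (i := a) (by omega) (hi2 ⟨a, ha⟩)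
            rw [hp]
            omega
          have hem1 : (⟨(r-1)*(s+1)+s, hhm⟩ : Fin m) ∈ Cst n K s m (u i' ⟨r*(s+1)+b, hxm⟩) := by
            apply mem_Cst_val.mpr
            rw [hpm _ (div_lt_n _), hc]
          have hem2 : (⟨(r-1)*(s+1)+s, hhm⟩ : Fin m) ∈ Cst n K s m
              ⟨(π i').val*(K+2)+r, idx_lt (π i').2 (by omega)⟩ := by
            rw [mem_Cst_idx (π i').2 (by omega) hhm]
            exact hpm _ (π i').2
          have e1 := hu2 i' ⟨(r-1)*(s+1)+s, hhm⟩ _ hjf hem1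
          have e2 := hu2 i' ⟨(r-1)*(s+1)+s, hhm⟩ _ hprev hem2
          have hj_eq : u i' ⟨r*(s+1)+b, hxm⟩
              = ⟨(π i').val*(K+2)+r, idx_lt (π i').2 (by omega)⟩ := e1.trans e2.symm
          have hb1 : ((π i').val+1).testBit b = true := by
            rw [hj_eq] at hjx
            have hp := (mem_Cst_idx (π i').2 (show r < K+2 by omega) hxm).mp hjx
            have := (prt_block (K := K) (i := (π i').val) hxdiv hrK).1.mp hp
            rwa [hxmod] at this
          have hb2 : ((j'.val/(K+2))+1).testBit b = true := by
            by_contra hno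
            simp only [Bool.not_eq_true] at hno
            have hxj' : (⟨r*(s+1)+b, hxm⟩ : Fin m) ∈ Cst n K s m j' := by
              apply mem_Cst_val.mpr
              rw [hj'mod]
              exact ((prt_block (K := K) (i := j'.val/(K+2)) hxdiv hrK).2).mpr
                (by rwa [hxmod])
            have e3 := hu2 i' ⟨r*(s+1)+b, hxm⟩ j' hj'f hxj'
            rw [hj_eq] at e3
            have hmods : j'.val % (K+2) = r := by
              rw [e3]
              exact mod_idx (by omega)
            omega
          rw [hb1, hb2]
        · -- the set containing x has part r+1, so it is j'
          have hermem : (⟨r*(s+1)+s, hem⟩ : Fin m) ∈ Cst n K s m (u i' ⟨r*(s+1)+b, hxm⟩) := by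
            apply mem_Cst_val.mpr
            have hp := prt_marker (K := K) (q := r) (i := (u i' ⟨r*(s+1)+b, hxm⟩).val/(K+2))
              hrK (hi2 ⟨_, div_lt_n _⟩)
            rw [hp, hc]
          have e1 : u i' ⟨r*(s+1)+b, hxm⟩ = j' := hu2 i' ⟨r*(s+1)+s, hem⟩ _ hjf hermem
          have hb2 : ((j'.val/(K+2))+1).testBit b = false := by
            have hxj' : (⟨r*(s+1)+b, hxm⟩ : Fin m) ∈ Cst n K s m j' := by
              rw [← e1]; exact hjx
            have hp := mem_Cst_val.mp hxj'
            rw [hj'mod] at hp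
            have := ((prt_block (K := K) (i := j'.val/(K+2)) hxdiv hrK).2).mp hp
            rwa [hxmod] at this
          have hb1 : ((π i').val+1).testBit b = false := by
            by_contra hno
            rw [Bool.not_eq_false] at hno
            have hxmem : (⟨r*(s+1)+b, hxm⟩ : Fin m) ∈ Cst n K s m
                ⟨(π i').val*(K+2)+r, idx_lt (π i').2 (by omega)⟩ := by
              rw [mem_Cst_idx (π i').2 (by omega) hxm]
              exact ((prt_block (K := K) (i := (π i').val) hxdiv hrK).1).mpr
                (by rwa [hxmod])
            have e2 := hu2 i' ⟨r*(s+1)+b, hxm⟩ _ hprev hxmem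
            have hmods : ((π i').val*(K+2)+r) % (K+2) = j'.val % (K+2) := by
              rw [← e1, ← e2]
            rw [mod_idx (by omega), hj'mod] at hmods
            omega
          rw [hb1, hb2]
      · exact testBit_eq_of_ge (hi2 (π i')) (hi2 ⟨_, hi''n⟩) (by omega)
    have hieq : (π i').val = j'.val/(K+2) := by
      have := Nat.eq_of_testBit_eq hbits; omega
    have hfin : j' = ⟨(π i').val*(K+2)+(r+1), idx_lt (π i').2 (by omega)⟩ := by
      apply Fin.ext
      show j'.val = (π i').val*(K+2)+(r+1)
      rw [hieq, ← hj'mod]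
      exact (Nat.div_add_mod' _ _).symm
    rw [← hfin]
    exact hj'f
  -- all parts of the class of `π i'` are assigned to `i'` by `f'`
  have hall : ∀ (i' : Fin n) (r : ℕ), r ≤ K+1 →
      ∀ (j : Fin (n*(K+2))), j.val = (π i').val*(K+2)+r → f' j = i' := by
    intro i' r
    induction r with
    | zero =>
      intro _ j hj
      have he : j = ⟨(π i').val*(K+2), idx_lt0 (π i').2⟩ := Fin.ext (by rw [hj]; rfl)
      rw [he]; exact hbase0 i'
    | succ r ih =>
      intro hr j hj
      rcases Nat.eq_zero_or_pos r with h0 | h1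
      · subst h0
        have he : j = ⟨(π i').val*(K+2)+1, idx_lt (π i').2 (by omega)⟩ := Fin.ext hj
        rw [he]; exact hbase1 i'
      · have hprev := ih (by omega) ⟨(π i').val*(K+2)+r, idx_lt (π i').2 (by omega)⟩ rfl
        have hnext := hstep i' r h1 (by omega) hprev
        have he : j = ⟨(π i').val*(K+2)+(r+1), idx_lt (π i').2 (by omega)⟩ := Fin.ext hj
        rw [he]; exact hnext
  refine ⟨(Equiv.ofBijective π hπbij).symm, funext fun j => ?_⟩
  have h1 : π ((Equiv.ofBijective π hπbij).symm (fres n K j)) = fres n K j :=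
    (Equiv.ofBijective π hπbij).apply_symm_apply _
  have h2 : (π ((Equiv.ofBijective π hπbij).symm (fres n K j))).val = j.val/(K+2) := by
    rw [h1]; rfl
  have h3 : j.val = (π ((Equiv.ofBijective π hπbij).symm (fres n K j))).val*(K+2)
      + j.val%(K+2) := by
    rw [h2]; exact (Nat.div_add_mod' _ _).symm
  exact hall _ (j.val%(K+2)) (by have := Nat.mod_lt j.val (y := K+2) (by omega); omega) j h3

theorem construction {n K s m : ℕ} (hns : n+1 ≤ 2^s) (hm : (K+1)*(s+1) ≤ m) :
    UniquelyResolvable n (Cst n K s m) :=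
  ⟨Cst_nonempty hns hm, fres n K, isres_fres,
    fun f' hf' => res_unique hns hm f' hf'⟩

lemma bddAbove_gset (n m : ℕ) :
    BddAbove {k | ∃ C : Fin k → Finset (Fin m), UniquelyResolvable n C} := by
  refine ⟨n*m, fun k hk => ?_⟩
  obtain ⟨C, hne, f, hf, -⟩ := hk
  have hinj : Function.Injective (fun j : Fin k => (f j, (C j).min' (hne j))) := by
    intro j1 j2 hj
    have h1 : f j1 = f j2 := congrArg Prod.fst hj
    have h2 : (C j1).min' (hne j1) = (C j2).min' (hne j2) := congrArg Prod.snd hj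
    have hm1 : (C j1).min' (hne j1) ∈ C j1 := Finset.min'_mem _ _
    have hm2 : (C j1).min' (hne j1) ∈ C j2 := h2 ▸ Finset.min'_mem _ _
    exact ExistsUnique.unique (hf (f j1) ((C j1).min' (hne j1))) ⟨rfl, hm1⟩ ⟨h1.symm, hm2⟩
  have hcard := Fintype.card_le_of_injective _ hinj
  simpa using hcard

end Stmt9Aux

open Stmt9Aux

/-- Lower bound: if `1 ≤ n ≤ 2 ^ (m-1) - 1`, then
`g n m > n (m+1) / (log₂(n+1) + 2)`. -/
theorem stmt9 (m n : ℕ) (hn : 1 ≤ n) (h : n ≤ 2 ^ (m - 1) - 1) :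
    ((n : ℝ) * (m + 1)) / (Real.logb 2 (n + 1) + 2) < (g n m : ℝ) := by
  have hm2 : 2 ≤ m := by
    by_contra hc
    have hmle : m - 1 = 0 := by omega
    rw [hmle] at h
    simp at h
    omega
  set s := Nat.clog 2 (n+1) with hs
  have hns : n + 1 ≤ 2^s := Nat.le_pow_clog (by norm_num) _
  have hs1 : 1 ≤ s := by
    by_contra hc
    have h0 : s = 0 := by omega
    rw [h0] at hns
    simp at hns
    omega
  have hpow : n+1 ≤ 2^(m-1) := by
    have hp : (0:ℕ) < 2^(m-1) := by positivity
    omega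
  have hsm : s ≤ m - 1 := by
    have hmono := Nat.clog_mono_right 2 hpow
    rwa [Nat.clog_pow 2 (m-1) (by norm_num)] at hmono
  have hs1m : s + 1 ≤ m := by omega
  set K := m/(s+1) - 1 with hK
  have hK1 : K + 1 = m/(s+1) := by
    have h1 : 1 ≤ m/(s+1) := (Nat.one_le_div_iff (by omega)).mpr hs1m
    omega
  have hmK : (K+1)*(s+1) ≤ m := by rw [hK1]; exact Nat.div_mul_le_self _ _
  have hmem : n*(K+2) ∈ {k | ∃ C : Fin k → Finset (Fin m), UniquelyResolvable n C} :=
    ⟨Cst n K s m, construction hns hmK⟩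
  have hg : n*(K+2) ≤ g n m := le_csSup (bddAbove_gset n m) hmem
  have hn0 : (0:ℝ) ≤ (n:ℝ) := Nat.cast_nonneg n
  have hL0 : (0:ℝ) ≤ Real.logb 2 ((n:ℝ)+1) := Real.logb_nonneg (by norm_num) (by linarith)
  have hLlt : (s:ℝ) < Real.logb 2 ((n:ℝ)+1) + 1 := by
    have hpred : 2^(s-1) < n+1 := Nat.pow_pred_clog_lt_self (by norm_num) (by omega)
    have hcast : ((2:ℝ))^(s-1 : ℕ) < (n:ℝ)+1 := by exact_mod_cast hpred
    have hlog : Real.logb 2 ((2:ℝ)^(s-1:ℕ)) < Real.logb 2 ((n:ℝ)+1) :=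
      Real.logb_lt_logb (by norm_num) (by positivity) hcast
    rw [Real.logb_pow, Real.logb_self_eq_one (by norm_num)] at hlog
    have hsub : ((s-1:ℕ):ℝ) = (s:ℝ) - 1 := by
      rw [Nat.cast_sub hs1]; norm_num
    rw [hsub] at hlog
    linarith
  have hnat : m + 1 ≤ (K+2)*(s+1) := by
    have h2 : (K+2)*(s+1) = (m/(s+1))*(s+1) + (s+1) := by rw [← hK1]; ring
    have h3 : (m/(s+1))*(s+1) + m%(s+1) = m := Nat.div_add_mod' m (s+1)
    have hmod : m % (s+1) ≤ s := by
      have := Nat.mod_lt m (show 0 < s+1 by omega); omega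
    calc m + 1 = (m/(s+1))*(s+1) + m%(s+1) + 1 := by rw [h3]
      _ ≤ (m/(s+1))*(s+1) + (s+1) := by
          rw [Nat.add_assoc]; exact Nat.add_le_add_left (by omega) _
      _ = (K+2)*(s+1) := h2.symm
  have hreal1 : ((m:ℝ) + 1) ≤ ((K:ℝ)+2)*((s:ℝ)+1) := by exact_mod_cast hnat
  have hreal2 : ((K:ℝ)+2)*((s:ℝ)+1) < ((K:ℝ)+2)*(Real.logb 2 ((n:ℝ)+1)+2) := by
    apply mul_lt_mul_of_pos_left _ (by positivity)
    linarith
  have hgr : (n:ℝ)*((K:ℝ)+2) ≤ (g n m : ℝ) := by exact_mod_cast hg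
  have hn1 : (1:ℝ) ≤ (n:ℝ) := by exact_mod_cast hn
  rw [div_lt_iff₀ (by linarith)]
  calc (n:ℝ)*((m:ℝ)+1) < (n:ℝ)*(((K:ℝ)+2)*(Real.logb 2 ((n:ℝ)+1)+2)) := by
        apply mul_lt_mul_of_pos_left _ (by linarith)
        linarith
    _ = ((n:ℝ)*((K:ℝ)+2))*(Real.logb 2 ((n:ℝ)+1)+2) := by ring
    _ ≤ (g n m : ℝ)*(Real.logb 2 ((n:ℝ)+1)+2) :=
        mul_le_mul_of_nonneg_right hgr (by linarith)
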